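/- Let ρ̆ : ℝ → ℝ be monotone nondecreasing, let c ∈ ℝ satisfy c < ρ̆(1) and suppose ρ̆(x) tends to c as x → -∞. Define ρ̃(x) = ρ̆(x+1) - ρ̆(1) if x < 0 and ρ̃(x) = -ρ̆(-(x-1)) + ρ̆(1) if x ≥ 0, and define ρ̃_H(x) = (ρ̃(x) - c + ρ̆(1)) / (2·(ρ̆(1) - c)). Then for every x > 0, the function a ↦ ρ̃_H(a·x) tends to 1 as a → +∞, and for every x < 0, the function a ↦ ρ̃_H(a·x) tends to 0 as a → +∞; i.e., ρ̃_H(a·x) converges pointwise (for x ≠ 0) to the Heaviside function H(x) as a → ∞. -/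

import Mathlib

open Filter

/-- The rescaled saturated activation `ρ̃_H(x) = (ρ̃(x) - c + ρ̆(1))/(2·(ρ̆(1) - c))`
converges pointwise (for `x ≠ 0`) to the Heaviside function:
`ρ̃_H(a·x) → 1` as `a → ∞` for `x > 0`, and `ρ̃_H(a·x) → 0` as `a → ∞` for
`x < 0`. -/
theorem saturated_heaviside_limit (ρ : ℝ → ℝ) (hmono : Monotone ρ)
    (c : ℝ) (hc : c < ρ 1) (hlim : Tendsto ρ atBot (nhds c))
    (ρtilde : ℝ → ℝ)
    (hρtilde : ∀ x, ρtilde x =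
      if x < 0 then ρ (x + 1) - ρ 1 else -ρ (-(x - 1)) + ρ 1)
    (ρH : ℝ → ℝ)
    (hρH : ∀ x, ρH x = (ρtilde x - c + ρ 1) / (2 * (ρ 1 - c))) :
    (∀ x : ℝ, 0 < x → Tendsto (fun a : ℝ => ρH (a * x)) atTop (nhds 1)) ∧
      (∀ x : ℝ, x < 0 → Tendsto (fun a : ℝ => ρH (a * x)) atTop (nhds 0)) := by
  have hd : (2 * (ρ 1 - c)) ≠ 0 := by nlinarith
  constructor
  · intro x hx
    have hax : Tendsto (fun a : ℝ => a * x) atTop atTop :=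
      tendsto_id.atTop_mul_const hx
    have h1 : Tendsto (fun a : ℝ => -(a * x - 1)) atTop atBot := by
      apply tendsto_neg_atBot_iff.mpr
      exact tendsto_atTop_add_const_right _ (-1) hax |>.congr (fun a => by ring)
    have h2 : Tendsto (fun a : ℝ => ρ (-(a * x - 1))) atTop (nhds c) :=
      hlim.comp h1
    have h3 : Tendsto (fun a : ℝ => (-ρ (-(a * x - 1)) + ρ 1 - c + ρ 1) /
        (2 * (ρ 1 - c))) atTop (nhds ((-c + ρ 1 - c + ρ 1) / (2 * (ρ 1 - c)))) :=
      (((h2.neg.add_const (ρ 1)).add_const (-c)).add_const (ρ 1)).div_const _ |>.congr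
        (fun a => by ring_nf)
    have hval : (-c + ρ 1 - c + ρ 1) / (2 * (ρ 1 - c)) = 1 := by
      rw [div_eq_one_iff_eq hd]
      ring
    rw [hval] at h3
    apply h3.congr'
    filter_upwards [eventually_ge_atTop (0:ℝ)] with a ha
    have : ¬ (a * x < 0) := not_lt.mpr (by positivity)
    rw [hρH, hρtilde, if_neg this]
  · intro x hx
    have hax : Tendsto (fun a : ℝ => a * x) atTop atBot := by
      have := tendsto_id.atTop_mul_const (neg_pos.mpr hx) (l := atTop)
      exact (tendsto_neg_atBot_iff.mpr this).congr (fun a => by simp only [id_eq]; ring)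
    have h2 : Tendsto (fun a : ℝ => ρ (a * x + 1)) atTop (nhds c) :=
      hlim.comp (tendsto_atBot_add_const_right _ 1 hax)
    have h3 : Tendsto (fun a : ℝ => (ρ (a * x + 1) - ρ 1 - c + ρ 1) /
        (2 * (ρ 1 - c))) atTop (nhds ((c - ρ 1 - c + ρ 1) / (2 * (ρ 1 - c)))) :=
      (((h2.add_const (-ρ 1)).add_const (-c)).add_const (ρ 1)).div_const _ |>.congr
        (fun a => by ring_nf)
    have hval : (c - ρ 1 - c + ρ 1) / (2 * (ρ 1 - c)) = 0 := by
      rw [show c - ρ 1 - c + ρ 1 = 0 by ring, zero_div]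
    rw [hval] at h3
    apply h3.congr'
    have h0 : Tendsto (fun a : ℝ => a * x) atTop atBot := hax
    filter_upwards [h0.eventually (eventually_lt_atBot (0:ℝ))] with a ha
    rw [hρH, hρtilde, if_pos ha]
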